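/- arXiv:2001.04347 — 4 statements merged into one kernel-verified Lean document; each statement's English description precedes it below -/
import Mathlib

section
/- Let T = (S, Σ, κ) be a stochastic transition system and let A ∈ Σ be an attractor for T. Then A is almost surely visited infinitely often from any initial distribution: for every initial probability distribution μ on (S, Σ), Prob_μ(GF A) = 1. -/
open MeasureTheory ProbabilityTheory Filter Set ENNReal

namespace STS

variable {S : Type*} [MeasurableSpace S]

/-- The finite-dimensional distributions of the Markov chain with initial distribution `μ`
and transition kernel `κ`: `finDist κ μ n` is the joint law of the first `n+1` states. -/
noncomputable def finDist (κ : Kernel S S) (μ : Measure S) : (n : ℕ) → Measure (Fin (n + 1) → S)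
  | 0 => μ.map (fun s => fun _ => s)
  | n + 1 => (finDist κ μ n).bind (fun x => (κ (x (Fin.last n))).map (Fin.snoc x))

/-- `P` assigns to each initial probability distribution `μ` the probability measure `Prob_μ`
on the space of runs `ℕ → S` (given by the Ionescu–Tulcea theorem), i.e. the unique probability
measure under which the coordinate process is a Markov chain with initial distribution `μ` and
transition kernel `κ`.  This is characterized by the finite-dimensional distributions. -/
def IsMarkovMeasureFamily (κ : Kernel S S) (P : Measure S → Measure (ℕ → S)) : Prop :=
  ∀ μ : Measure S, IsProbabilityMeasure μ →
    IsProbabilityMeasure (P μ) ∧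
    ∀ n : ℕ, (P μ).map (fun ω (i : Fin (n + 1)) => ω i.1) = finDist κ μ n

/-- `F B`: the set of runs that visit `B` at some point. -/
def FEv (B : Set S) : Set (ℕ → S) := {ω | ∃ k, ω k ∈ B}

/-- `F^{≤n} B`: the set of runs that visit `B` within `n` steps. -/
def FLe (n : ℕ) (B : Set S) : Set (ℕ → S) := {ω | ∃ k ≤ n, ω k ∈ B}

/-- `B' U B`: runs that stay in `B'` until a first visit to `B`. -/
def Until (B' B : Set S) : Set (ℕ → S) := {ω | ∃ k, ω k ∈ B ∧ ∀ j < k, ω j ∈ B'}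

/-- `B' U^{≤n} B`: runs that stay in `B'` until a first visit to `B`, within `n` steps. -/
def UntilLe (n : ℕ) (B' B : Set S) : Set (ℕ → S) :=
  {ω | ∃ k ≤ n, ω k ∈ B ∧ ∀ j < k, ω j ∈ B'}

/-- `G B`: runs that always stay in `B`. -/
def Glob (B : Set S) : Set (ℕ → S) := {ω | ∀ k, ω k ∈ B}

/-- `GF B`: runs that visit `B` infinitely often. -/
def GlobFEv (B : Set S) : Set (ℕ → S) := {ω | ∀ n : ℕ, ∃ k ≥ n, ω k ∈ B}

/-- The avoid-set `B̃` of `B`: states from which `B` is reached with probability `0`. -/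
def avoidSet (P : Measure S → Measure (ℕ → S)) (B : Set S) : Set S :=
  {s : S | P (Measure.dirac s) (FEv B) = 0}

/-- The STS is decisive w.r.t. `B`: from any initial distribution, almost surely either `B` or
its avoid-set `B̃` is eventually visited. -/
def Decisive (P : Measure S → Measure (ℕ → S)) (B : Set S) : Prop :=
  ∀ μ : Measure S, IsProbabilityMeasure μ → P μ (FEv B ∪ FEv (avoidSet P B)) = 1

/-- `A` is an attractor: it is reached almost surely from any initial distribution. -/
def IsAttractor (P : Measure S → Measure (ℕ → S)) (A : Set S) : Prop :=
  ∀ μ : Measure S, IsProbabilityMeasure μ → P μ (FEv A) = 1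

lemma measurable_snoc2 (n : ℕ) :
    Measurable (fun p : ((Fin (n+1) → S) × S) => (Fin.snoc p.1 p.2 : Fin (n+2) → S)) := by
  apply measurable_pi_lambda
  intro i
  induction i using Fin.lastCases with
  | last => simpa using measurable_snd
  | cast j =>
      simp only [Fin.snoc_castSucc]
      exact (measurable_pi_apply j).comp measurable_fst

lemma measurable_snoc_right (n : ℕ) (x : Fin (n+1) → S) :
    Measurable (fun s : S => (Fin.snoc x s : Fin (n+2) → S)) :=
  (measurable_snoc2 n).comp (measurable_prodMk_left)

/-- The one-step extension kernel. -/
noncomputable def step (κ : Kernel S S) [IsMarkovKernel κ] (n : ℕ) :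
    Kernel (Fin (n+1) → S) (Fin (n+2) → S) where
  toFun := fun x => (κ (x (Fin.last n))).map (Fin.snoc x)
  measurable' := by
    rw [Measure.measurable_measure]
    intro A hA
    have h1 : ∀ x : Fin (n+1) → S,
        ((κ (x (Fin.last n))).map (Fin.snoc x)) A = κ (x (Fin.last n))
          (Prod.mk x ⁻¹' ((fun p : ((Fin (n+1) → S) × S) => (Fin.snoc p.1 p.2 : Fin (n+2) → S)) ⁻¹' A)) := by
      intro x
      rw [Measure.map_apply (measurable_snoc_right n x) hA]
      rfl
    simp only [h1]
    exact Kernel.measurable_kernel_prodMk_left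
      (κ := κ.comap (fun x : Fin (n+1) → S => x (Fin.last n)) (measurable_pi_apply _))
      ((measurable_snoc2 n) hA)

lemma step_apply (κ : Kernel S S) [IsMarkovKernel κ] (n : ℕ) (x : Fin (n+1) → S) :
    step κ n x = (κ (x (Fin.last n))).map (Fin.snoc x) := rfl

instance (κ : Kernel S S) [IsMarkovKernel κ] (n : ℕ) : IsMarkovKernel (step κ n) := by
  constructor
  intro x
  rw [step_apply]
  exact Measure.isProbabilityMeasure_map (measurable_snoc_right n x).aemeasurable

lemma finDist_succ (κ : Kernel S S) [IsMarkovKernel κ] (μ : Measure S) (n : ℕ) :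
    finDist κ μ (n+1) = (finDist κ μ n).bind (step κ n) := rfl

section Bind
variable {α β γ : Type*} [MeasurableSpace α] [MeasurableSpace β] [MeasurableSpace γ]

lemma map_bind_kernel (μ : Measure α) (f : Kernel α β) {g : β → γ} (hg : Measurable g) :
    (μ.bind f).map g = μ.bind (fun x => (f x).map g) := by
  have hmeas : Measurable (fun x => (f x).map g) := by
    have : (fun x => (f x).map g) = ⇑(f.map g) := by
      ext x : 1
      rw [Kernel.map_apply _ hg]
    rw [this]; exact (f.map g).measurable
  ext A hA
  rw [Measure.map_apply hg hA, Measure.bind_apply (hg hA) f.measurable.aemeasurable,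
    Measure.bind_apply hA hmeas.aemeasurable]
  congr 1
  ext x
  rw [Measure.map_apply hg hA]

lemma bind_map_kernel (μ : Measure α) (f : Kernel β γ) {g : α → β} (hg : Measurable g) :
    (μ.map g).bind f = μ.bind (fun x => f (g x)) := by
  ext A hA
  have h2 : Measurable (fun x => f (g x)) := f.measurable.comp hg
  rw [Measure.bind_apply hA f.measurable.aemeasurable, Measure.bind_apply hA h2.aemeasurable,
    lintegral_map (f.measurable_coe hA) hg]

end Bind

/-- Dropping the first `n` coordinates. -/
def drop (n m : ℕ) : (Fin (n+m+1) → S) → (Fin (m+1) → S) := fun x i => x ⟨n + i.1, by omega⟩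

lemma measurable_drop (n m : ℕ) : Measurable (drop (S := S) n m) :=
  measurable_pi_lambda _ (fun _ => measurable_pi_apply _)

set_option linter.unusedSectionVars false in
lemma snoc_mk_eq {r : ℕ} (x : Fin (r+1) → S) (s : S) (i : Fin (r+2)) :
    (Fin.snoc x s : Fin (r+2) → S) i = if h : i.1 < r + 1 then x ⟨i.1, h⟩ else s := by
  obtain ⟨v, hv⟩ := i
  split_ifs with h
  · have e0 : (⟨v, hv⟩ : Fin (r+2)) = Fin.castSucc ⟨v, h⟩ := Fin.ext (by simp)
    have e1 : (Fin.snoc x s : Fin (r+2) → S) (Fin.castSucc ⟨v, h⟩) = x ⟨v, h⟩ := by rw [Fin.snoc_castSucc]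
    exact (congrArg (Fin.snoc x s) e0).trans e1
  · have h' : ¬ v < r + 1 := h
    have e0 : (⟨v, hv⟩ : Fin (r+2)) = Fin.last (r+1) := Fin.ext (by simp [Fin.last]; omega)
    have e1 : (Fin.snoc x s : Fin (r+2) → S) (Fin.last (r+1)) = s := by simp
    exact (congrArg (Fin.snoc x s) e0).trans e1

lemma drop_snoc (n m : ℕ) (x : Fin (n+m+1) → S) (s : S) :
    drop n (m+1) (Fin.snoc x s) = Fin.snoc (drop n m x) s := by
  funext i
  simp only [drop]
  rw [snoc_mk_eq x s ⟨n + i.1, by omega⟩, snoc_mk_eq (drop n m x) s i]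
  by_cases h : i.1 < m + 1
  · rw [dif_pos h, dif_pos (show n + i.1 < n + m + 1 by omega)]
    rfl
  · rw [dif_neg h, dif_neg (show ¬(n + i.1 < n + m + 1) by omega)]

set_option linter.unusedSectionVars false in
lemma drop_last (n m : ℕ) (x : Fin (n+m+1) → S) :
    drop n m x (Fin.last m) = x (Fin.last (n+m)) := rfl

/-- Markov shift property of the finite-dimensional distributions. -/
lemma map_drop_finDist (κ : Kernel S S) [IsMarkovKernel κ] (μ : Measure S) (n m : ℕ) :
    (finDist κ μ (n+m)).map (drop n m) =
      finDist κ ((finDist κ μ n).map (fun x => x (Fin.last n))) m := by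
  induction m with
  | zero =>
      show (finDist κ μ n).map (drop n 0) = _
      rw [show finDist κ ((finDist κ μ n).map (fun x => x (Fin.last n))) 0 =
        ((finDist κ μ n).map (fun x => x (Fin.last n))).map (fun s => fun _ => s) from rfl]
      rw [Measure.map_map (measurable_pi_lambda (fun (s : S) (_ : Fin 1) => s)
        (fun _ => measurable_id)) (measurable_pi_apply _)]
      congr 1
      funext x i
      show x _ = x (Fin.last n)
      congr 1
      apply Fin.ext
      simp [Fin.last]
  | succ m ih =>
      have key : ∀ x : Fin (n+m+1) → S,
          (step κ (n+m) x).map (drop n (m+1)) = step κ m (drop n m x) := by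
        intro x
        rw [step_apply, step_apply,
          Measure.map_map (measurable_drop n (m+1)) (measurable_snoc_right _ x), drop_last]
        congr 1
        funext s
        exact drop_snoc n m x s
      calc (finDist κ μ (n+(m+1))).map (drop n (m+1))
          = ((finDist κ μ (n+m)).bind (step κ (n+m))).map (drop n (m+1)) := rfl
        _ = (finDist κ μ (n+m)).bind (fun x => (step κ (n+m) x).map (drop n (m+1))) :=
            map_bind_kernel _ _ (measurable_drop n (m+1))
        _ = (finDist κ μ (n+m)).bind (fun x => step κ m (drop n m x)) := by
            simp only [key]
        _ = ((finDist κ μ (n+m)).map (drop n m)).bind (step κ m) :=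
            (bind_map_kernel _ _ (measurable_drop n m)).symm
        _ = (finDist κ ((finDist κ μ n).map (fun x => x (Fin.last n))) m).bind (step κ m) := by
            rw [ih]
        _ = _ := (finDist_succ κ _ m).symm


/-- An attractor is almost surely visited infinitely often from any initial
distribution. -/
theorem attractor_visited_infinitely_often
    (κ : Kernel S S) [IsMarkovKernel κ]
    (P : Measure S → Measure (ℕ → S)) (hP : IsMarkovMeasureFamily κ P)
    (A : Set S) (hA : MeasurableSet A) (hattr : IsAttractor P A)
    (μ : Measure S) (hμ : IsProbabilityMeasure μ) :
    P μ (GlobFEv A) = 1 := by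
  classical
  have hRmeas : ∀ r : ℕ, Measurable (fun ω : ℕ → S => fun i : Fin (r+1) => ω i.1) :=
    fun r => measurable_pi_lambda _ fun i => measurable_pi_apply _
  have hsetmeas : ∀ (r : ℕ) (p : Fin (r+1) → Prop),
      MeasurableSet {x : Fin (r+1) → S | ∀ i, p i → x i ∉ A} := by
    intro r p
    have : {x : Fin (r+1) → S | ∀ i, p i → x i ∉ A} =
        ⋂ i, {x : Fin (r+1) → S | p i → x i ∉ A} := by
      ext x; simp [Set.mem_iInter]
    rw [this]
    refine MeasurableSet.iInter fun i => ?_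
    by_cases hp : p i
    · have : {x : Fin (r+1) → S | p i → x i ∉ A} = (fun x : Fin (r+1) → S => x i) ⁻¹' Aᶜ := by
        ext x; simp [hp]
      rw [this]; exact (measurable_pi_apply i) hA.compl
    · have : {x : Fin (r+1) → S | p i → x i ∉ A} = Set.univ := by
        ext x; simp [hp]
      rw [this]; exact MeasurableSet.univ
  have hall : ∀ r : ℕ, MeasurableSet {y : Fin (r+1) → S | ∀ i, y i ∉ A} := by
    intro r
    have : {y : Fin (r+1) → S | ∀ i, y i ∉ A} = ⋂ i, (fun y : Fin (r+1) → S => y i) ⁻¹' Aᶜ := by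
      ext y; simp [Set.mem_iInter]
    rw [this]
    exact MeasurableSet.iInter fun i => (measurable_pi_apply i) hA.compl
  have hFEv : MeasurableSet (FEv A) := by
    have : FEv A = ⋃ k, (fun ω : ℕ → S => ω k) ⁻¹' A := by ext ω; simp [FEv]
    rw [this]; exact MeasurableSet.iUnion fun k => (measurable_pi_apply k) hA
  haveI hPμ := (hP μ hμ).1
  have hD : ∀ n : ℕ, P μ {ω : ℕ → S | ∀ k, n ≤ k → ω k ∉ A} = 0 := by
    intro n
    set ν : Measure S := (finDist κ μ n).map (fun x => x (Fin.last n)) with hν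
    have hνprob : IsProbabilityMeasure ν := by
      rw [hν, ← (hP μ hμ).2 n]
      haveI : IsProbabilityMeasure ((P μ).map (fun ω (i : Fin (n+1)) => ω i.1)) :=
        Measure.isProbabilityMeasure_map (hRmeas n).aemeasurable
      exact Measure.isProbabilityMeasure_map (measurable_pi_apply _).aemeasurable
    haveI := hνprob
    haveI hPν := (hP ν hνprob).1
    have key : ∀ m : ℕ, P μ {ω : ℕ → S | ∀ k, n ≤ k → k ≤ n + m → ω k ∉ A} =
        P ν {ω : ℕ → S | ∀ k, k ≤ m → ω k ∉ A} := by
      intro m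
      have e1 : {ω : ℕ → S | ∀ k, n ≤ k → k ≤ n + m → ω k ∉ A} =
          (fun ω : ℕ → S => fun i : Fin (n+m+1) => ω i.1) ⁻¹'
            {x : Fin (n+m+1) → S | ∀ i, n ≤ i.1 → x i ∉ A} := by
        ext ω
        constructor
        · intro h i hi; exact h i.1 hi (by omega)
        · intro h k h1 h2; exact h ⟨k, by omega⟩ h1
      have e2 : {x : Fin (n+m+1) → S | ∀ i, n ≤ i.1 → x i ∉ A} =
          drop n m ⁻¹' {y : Fin (m+1) → S | ∀ i, y i ∉ A} := by
        ext x
        constructor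
        · intro h i
          exact h ⟨n + i.1, by omega⟩ (by simp)
        · intro h i hi
          have h2 := h ⟨i.1 - n, by omega⟩
          have hidx : (⟨n + ((⟨i.1 - n, by omega⟩ : Fin (m+1)).1), by omega⟩ : Fin (n+m+1)) = i :=
            Fin.ext (by simp; omega)
          show x i ∉ A
          rw [← hidx]
          exact h2
      have e3 : {ω : ℕ → S | ∀ k, k ≤ m → ω k ∉ A} =
          (fun ω : ℕ → S => fun i : Fin (m+1) => ω i.1) ⁻¹'
            {y : Fin (m+1) → S | ∀ i, y i ∉ A} := by
        ext ω
        constructor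
        · intro h i; exact h i.1 (by omega)
        · intro h k hk; exact h ⟨k, by omega⟩
      rw [e1, ← Measure.map_apply (hRmeas (n+m)) (hsetmeas (n+m) (fun i => n ≤ i.1)),
        (hP μ hμ).2 (n+m), e2,
        ← Measure.map_apply (measurable_drop n m) (hall m), map_drop_finDist, ← hν,
        ← (hP ν hνprob).2 m, Measure.map_apply (hRmeas m) (hall m), ← e3]
    -- continuity from above on the ν side
    have hms : ∀ m : ℕ, MeasurableSet {ω : ℕ → S | ∀ k, k ≤ m → ω k ∉ A} := by
      intro m
      have : {ω : ℕ → S | ∀ k, k ≤ m → ω k ∉ A} =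
          ⋂ k, ⋂ (_ : k ≤ m), (fun ω : ℕ → S => ω k) ⁻¹' Aᶜ := by
        ext ω; simp [Set.mem_iInter]
      rw [this]
      exact MeasurableSet.iInter fun k => MeasurableSet.iInter fun _ =>
        (measurable_pi_apply k) hA.compl
    have hanti : Antitone (fun m : ℕ => {ω : ℕ → S | ∀ k, k ≤ m → ω k ∉ A}) := by
      intro a b hab ω h k hk
      exact h k (hk.trans hab)
    have hdir : Directed (· ⊇ ·) (fun m : ℕ => {ω : ℕ → S | ∀ k, k ≤ m → ω k ∉ A}) :=
      fun a b => ⟨max a b, hanti (le_max_left a b), hanti (le_max_right a b)⟩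
    have hii := Directed.measure_iInter (μ := P ν)
      (fun m => (hms m).nullMeasurableSet) hdir ⟨0, measure_ne_top _ _⟩
    have hint : (⋂ m, {ω : ℕ → S | ∀ k, k ≤ m → ω k ∉ A}) = (FEv A)ᶜ := by
      ext ω
      simp only [Set.mem_iInter, Set.mem_setOf_eq, Set.mem_compl_iff, FEv, not_exists]
      exact ⟨fun h k => h k k le_rfl, fun h m k _ => h k⟩
    have h0 : P ν (FEv A)ᶜ = 0 := by
      rw [prob_compl_eq_zero_iff hFEv]
      exact hattr ν hνprob
    have hmono : P μ {ω : ℕ → S | ∀ k, n ≤ k → ω k ∉ A} ≤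
        ⨅ m, P ν {ω : ℕ → S | ∀ k, k ≤ m → ω k ∉ A} := by
      refine le_iInf fun m => ?_
      rw [← key m]
      exact measure_mono (fun ω h k h1 _ => h k h1)
    rw [hint, h0] at hii
    exact le_antisymm (hmono.trans (le_of_eq hii.symm)) zero_le
  have hGF : MeasurableSet (GlobFEv A) := by
    have : GlobFEv A = ⋂ n, ⋃ k, ⋃ (_ : n ≤ k), (fun ω : ℕ → S => ω k) ⁻¹' A := by
      ext ω; simp [GlobFEv]
    rw [this]
    exact MeasurableSet.iInter fun n => MeasurableSet.iUnion fun k =>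
      MeasurableSet.iUnion fun _ => (measurable_pi_apply k) hA
  have hcompl : (GlobFEv A)ᶜ = ⋃ n, {ω : ℕ → S | ∀ k, n ≤ k → ω k ∉ A} := by
    ext ω
    simp only [GlobFEv, Set.mem_compl_iff, Set.mem_setOf_eq, Set.mem_iUnion, not_forall,
      not_exists, ge_iff_le]
    constructor
    · rintro ⟨n, hn⟩
      exact ⟨n, fun k hk hmem => hn k ⟨hk, hmem⟩⟩
    · rintro ⟨n, hn⟩
      exact ⟨n, fun k hk => hn k hk.1 hk.2⟩
  rw [← prob_compl_eq_zero_iff hGF, hcompl]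
  exact measure_iUnion_null fun n => hD n

end STS
end

section
/- Consider the random-walk STS T on S = ℕ (with the discrete σ-algebra) whose Markov kernel satisfies κ(0, ·) = δ_1 and, for n ≥ 1, κ(n, ·) = p·δ_{n+1} + (1−p)·δ_{n−1}, where 0 < p ≤ 1/2. Then for every initial probability distribution μ on ℕ, Prob_μ(F {0}) = 1; in particular, T is decisive with respect to B = {0}. -/
open MeasureTheory ProbabilityTheory Filter Set ENNReal

namespace STS

variable {S : Type*} [MeasurableSpace S]

/-! ### Auxiliary lemmas -/

lemma measurable_cnt {α β : Type*} [MeasurableSpace α] [MeasurableSingletonClass α] [Countable α]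
    [MeasurableSpace β] (f : α → β) : Measurable f :=
  fun _ _ => (Set.to_countable _).measurableSet

lemma measurableSet_cnt {α : Type*} [MeasurableSpace α] [MeasurableSingletonClass α] [Countable α]
    (s : Set α) : MeasurableSet s := (Set.to_countable _).measurableSet

section cnt
variable {α β γ : Type*} [MeasurableSpace α] [MeasurableSingletonClass α] [Countable α]
  [MeasurableSpace β] [MeasurableSingletonClass β] [Countable β] [MeasurableSpace γ]

lemma bind_map_cnt (μ : Measure α) (g : α → β) (f : β → Measure γ) :
    (μ.map g).bind f = μ.bind (f ∘ g) := by
  ext s hs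
  rw [Measure.bind_apply hs (measurable_cnt f).aemeasurable, Measure.bind_apply hs (measurable_cnt _).aemeasurable,
    lintegral_map (measurable_cnt _) (measurable_cnt g)]
  rfl

lemma map_bind_cnt (μ : Measure α) (f : α → Measure β) (g : β → γ) :
    (μ.bind f).map g = μ.bind (fun a => (f a).map g) := by
  ext s hs
  rw [Measure.map_apply (measurable_cnt g) hs,
    Measure.bind_apply (measurableSet_cnt _) (measurable_cnt f).aemeasurable,
    Measure.bind_apply hs (measurable_cnt _).aemeasurable]
  refine lintegral_congr fun a => ?_
  rw [Measure.map_apply (measurable_cnt g) hs]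
end cnt

lemma finDist_prob (κ : Kernel ℕ ℕ) [IsMarkovKernel κ] :
    ∀ (n : ℕ) (μ : Measure ℕ), IsProbabilityMeasure μ → IsProbabilityMeasure (finDist κ μ n) := by
  intro n
  induction n with
  | zero =>
    intro μ hμ
    exact Measure.isProbabilityMeasure_map (measurable_cnt _).aemeasurable
  | succ n ih =>
    intro μ hμ
    haveI := ih μ hμ
    constructor
    rw [finDist, Measure.bind_apply MeasurableSet.univ (measurable_cnt _).aemeasurable]
    simp [Measure.map_apply (measurable_cnt _) MeasurableSet.univ]

lemma finDist_succ_s9 (κ : Kernel ℕ ℕ) :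
    ∀ (n : ℕ) (μ : Measure ℕ),
      finDist κ μ (n + 1) = μ.bind (fun s => (finDist κ (κ s) n).map (Fin.cons s)) := by
  intro n
  induction n with
  | zero =>
    intro μ
    rw [show finDist κ μ 1
        = (μ.map (fun s (_ : Fin 1) => s)).bind
            (fun x => (κ (x (Fin.last 0))).map (Fin.snoc x)) from rfl,
      bind_map_cnt]
    refine congrArg _ (funext fun s => ?_)
    simp only [Function.comp_apply]
    rw [show finDist κ (κ s) 0 = (κ s).map (fun t (_ : Fin 1) => t) from rfl,
      Measure.map_map (measurable_cnt _) (measurable_cnt _)]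
    congr 1
    funext t i
    fin_cases i <;> simp [Fin.snoc, Fin.cons] <;> rfl
  | succ n ih =>
    intro μ
    rw [show finDist κ μ (n + 2)
        = (finDist κ μ (n + 1)).bind
            (fun x => (κ (x (Fin.last (n + 1)))).map (Fin.snoc x)) from rfl,
      ih, Measure.bind_bind (measurable_cnt _).aemeasurable (measurable_cnt _).aemeasurable]
    refine congrArg _ (funext fun s => ?_)
    rw [bind_map_cnt,
      show finDist κ (κ s) (n + 1)
        = (finDist κ (κ s) n).bind (fun y => (κ (y (Fin.last n))).map (Fin.snoc y)) from rfl,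
      map_bind_cnt]
    refine congrArg _ (funext fun y => ?_)
    simp only [Function.comp_apply]
    rw [Measure.map_map (measurable_cnt _) (measurable_cnt _)]
    have h1 : (Fin.cons s y : Fin (n + 2) → ℕ) (Fin.last (n + 1)) = y (Fin.last n) := by
      rw [← Fin.succ_last, Fin.cons_succ]
    rw [h1]
    congr 1
    funext t
    exact (Fin.cons_snoc_eq_snoc_cons s y t).symm

/-- Finite-horizon hitting probability of state `0` for the kernel `κ`. -/
noncomputable def hitP (κ : Kernel ℕ ℕ) : ℕ → ℕ → ℝ≥0∞
  | 0 => fun s => if s = 0 then 1 else 0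
  | n + 1 => fun s => if s = 0 then 1 else ∫⁻ t, hitP κ n t ∂(κ s)

lemma hitP_le_one (κ : Kernel ℕ ℕ) [IsMarkovKernel κ] : ∀ n s, hitP κ n s ≤ 1 := by
  intro n
  induction n with
  | zero => intro s; by_cases h : s = 0 <;> simp [hitP, h]
  | succ n ih =>
    intro s
    by_cases h : s = 0
    · simp [hitP, h]
    · simp only [hitP, h, if_false]
      calc ∫⁻ t, hitP κ n t ∂(κ s) ≤ ∫⁻ _, 1 ∂(κ s) := lintegral_mono ih
        _ = 1 := by simp

lemma hitP_mono (κ : Kernel ℕ ℕ) : ∀ n s, hitP κ n s ≤ hitP κ (n + 1) s := by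
  intro n
  induction n with
  | zero =>
    intro s
    by_cases h : s = 0 <;> simp [hitP, h]
  | succ n ih =>
    intro s
    by_cases h : s = 0
    · simp [hitP, h]
    · simp only [hitP, h, if_false]
      exact lintegral_mono ih

lemma finDist_hitSet (κ : Kernel ℕ ℕ) [IsMarkovKernel κ] :
    ∀ (n : ℕ) (μ : Measure ℕ), IsProbabilityMeasure μ →
      finDist κ μ n {x | ∃ i, x i = 0} = ∫⁻ s, hitP κ n s ∂μ := by
  intro n
  induction n with
  | zero =>
    intro μ hμ
    rw [show finDist κ μ 0 = μ.map (fun s (_ : Fin 1) => s) from rfl,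
      Measure.map_apply (measurable_cnt _) (measurableSet_cnt _)]
    have hset : ((fun s (_ : Fin 1) => s) ⁻¹' {x | ∃ i, x i = 0}) = {0} := by
      ext s; simp [Set.mem_preimage]
    rw [hset]
    have : (fun s => hitP κ 0 s) = Set.indicator {0} (fun _ => (1 : ℝ≥0∞)) := by
      funext s
      by_cases h : s = 0 <;> simp [hitP, h, Set.indicator_apply]
    rw [this]
    exact (lintegral_indicator_one (measurableSet_singleton 0)).symm
  | succ n ih =>
    intro μ hμ
    rw [finDist_succ_s9, Measure.bind_apply (measurableSet_cnt _) (measurable_cnt _).aemeasurable]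
    have key : ∀ s, ((finDist κ (κ s) n).map (Fin.cons s)) {x | ∃ i, x i = 0}
        = hitP κ (n + 1) s := by
      intro s
      rw [Measure.map_apply (measurable_cnt _) (measurableSet_cnt _)]
      by_cases hs : s = 0
      · subst hs
        have hpre : (Fin.cons (α := fun _ : Fin (n + 2) => ℕ) 0 ⁻¹' {x | ∃ i, x i = 0})
            = Set.univ := by
          ext y
          simp [Fin.exists_fin_succ]
        haveI := finDist_prob κ n (κ 0) inferInstance
        rw [hpre]
        simp [hitP, measure_univ]
      · have hpre : (Fin.cons (α := fun _ : Fin (n + 2) => ℕ) s ⁻¹' {x | ∃ i, x i = 0})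
            = {y | ∃ i, y i = 0} := by
          ext y
          simp [Fin.exists_fin_succ, hs]
        rw [hpre, ih (κ s) inferInstance]
        simp [hitP, hs]
    simp_rw [key]

lemma analysis_step (p : ℝ≥0∞) (hp0 : 0 < p) (hp : p ≤ 1 / 2)
    (V : ℕ → ℝ≥0∞) (hV0 : V 0 = 1) (hVle : ∀ m, V m ≤ 1)
    (hVrec : ∀ m, V (m + 1) = p * V (m + 2) + (1 - p) * V m) :
    ∀ m, V m = 1 := by
  have hpt : p ≠ ⊤ := ne_top_of_le_ne_top (by norm_num) hp
  have hp1 : p ≤ 1 := hp.trans (by norm_num)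
  set q : ℝ := p.toReal with hqdef
  have hq0 : 0 < q := ENNReal.toReal_pos hp0.ne' hpt
  have hq2 : q ≤ 1 / 2 := by
    have := ENNReal.toReal_mono (by norm_num : (1 / 2 : ℝ≥0∞) ≠ ⊤) hp
    simpa using this
  have hVne : ∀ m, V m ≠ ⊤ := fun m => ne_top_of_le_ne_top one_ne_top (hVle m)
  set g : ℕ → ℝ := fun m => (V m).toReal with hgdef
  have hg0 : g 0 = 1 := by simp [hgdef, hV0]
  have hgle : ∀ m, g m ≤ 1 := fun m => by
    simpa using ENNReal.toReal_mono one_ne_top (hVle m)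
  have hgnn : ∀ m, 0 ≤ g m := fun m => ENNReal.toReal_nonneg
  have hrec : ∀ m, g (m + 1) = q * g (m + 2) + (1 - q) * g m := by
    intro m
    have h1 : ((1 : ℝ≥0∞) - p).toReal = 1 - q := by
      rw [ENNReal.toReal_sub_of_le hp1 one_ne_top, ENNReal.toReal_one]
    have h2 := congrArg ENNReal.toReal (hVrec m)
    rwa [ENNReal.toReal_add (ENNReal.mul_ne_top hpt (hVne _))
        (ENNReal.mul_ne_top (ENNReal.sub_ne_top one_ne_top) (hVne _)),
      ENNReal.toReal_mul, ENNReal.toReal_mul, h1] at h2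
  have hd : ∀ m, q * (g (m + 1) - g (m + 2)) = (1 - q) * (g m - g (m + 1)) := by
    intro m
    linear_combination hrec m
  have hd0 : g 0 - g 1 = 0 := by
    rcases lt_trichotomy (g 0 - g 1) 0 with h | h | h
    · exfalso
      have : g 1 > 1 := by linarith [hg0]
      linarith [hgle 1]
    · exact h
    · exfalso
      set d0 : ℝ := g 0 - g 1 with hd0def
      have hge : ∀ m, g m - g (m + 1) ≥ d0 := by
        intro m
        induction m with
        | zero => exact le_refl _
        | succ m ih =>
          have hm := hd m
          nlinarith
      have hsum : ∀ m : ℕ, g m ≤ 1 - m * d0 := by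
        intro m
        induction m with
        | zero => simp [hg0]
        | succ m ih =>
          have := hge m
          push_cast
          nlinarith
      obtain ⟨m, hm⟩ := exists_nat_gt (1 / d0)
      have h1 : (1 : ℝ) < m * d0 := by
        rw [div_lt_iff₀ h] at hm
        linarith
      have := hsum m
      linarith [hgnn m]
  have hdall : ∀ m, g m - g (m + 1) = 0 := by
    intro m
    induction m with
    | zero => exact hd0
    | succ m ih =>
      have hm := hd m
      rw [ih, mul_zero] at hm
      rcases mul_eq_zero.mp hm with h | h
      · exact absurd h hq0.ne'
      · exact h
  have hgall : ∀ m, g m = 1 := by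
    intro m
    induction m with
    | zero => exact hg0
    | succ m ih =>
      have := hdall m
      linarith
  intro m
  have : (V m).toReal = (1 : ℝ≥0∞).toReal := by simpa using hgall m
  exact (ENNReal.toReal_eq_toReal_iff' (hVne m) one_ne_top).mp this

lemma hitP_iSup_eq_one (κ : Kernel ℕ ℕ) [IsMarkovKernel κ]
    (p : ℝ≥0∞) (hp0 : 0 < p) (hp : p ≤ 1 / 2)
    (hκ : ∀ n : ℕ, κ (n + 1) = p • Measure.dirac (n + 2) + (1 - p) • Measure.dirac n) :
    ∀ s, (⨆ n, hitP κ n s) = 1 := by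
  set V : ℕ → ℝ≥0∞ := fun s => ⨆ n, hitP κ n s with hVdef
  have hmono : ∀ s, Monotone fun n => hitP κ n s := fun s =>
    monotone_nat_of_le_succ fun n => hitP_mono κ n s
  have hV0 : V 0 = 1 := by
    have : ∀ n, hitP κ n 0 = 1 := by
      intro n; cases n <;> simp [hitP]
    simp [hVdef, this]
  have hVle : ∀ m, V m ≤ 1 := fun m => iSup_le (fun n => hitP_le_one κ n m)
  have hVrec : ∀ m, V (m + 1) = p * V (m + 2) + (1 - p) * V m := by
    intro m
    have hshift : V (m + 1) = ⨆ n, hitP κ (n + 1) (m + 1) := by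
      refine le_antisymm (iSup_le fun n => ?_) (iSup_le fun n => le_iSup (fun n => hitP κ n (m+1)) (n+1))
      exact (hitP_mono κ n (m + 1)).trans (le_iSup (fun n => hitP κ (n + 1) (m + 1)) n)
    rw [hshift]
    have h1 : ∀ n, hitP κ (n + 1) (m + 1)
        = p * hitP κ n (m + 2) + (1 - p) * hitP κ n m := by
      intro n
      simp only [hitP, Nat.succ_ne_zero, if_false, hκ m]
      rw [lintegral_add_measure, lintegral_smul_measure, lintegral_smul_measure,
        lintegral_dirac, lintegral_dirac, smul_eq_mul, smul_eq_mul]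
    simp_rw [h1]
    rw [← ENNReal.iSup_add_iSup_of_monotone
        (f := fun n => p * hitP κ n (m + 2)) (g := fun n => (1 - p) * hitP κ n m)
        (fun i j hij => mul_le_mul_right (hmono (m + 2) hij) p)
        (fun i j hij => mul_le_mul_right (hmono m hij) (1 - p)),
      ENNReal.mul_iSup, ENNReal.mul_iSup]
  exact analysis_step p hp0 hp V hV0 hVle hVrec

/-- For the random walk on `ℕ` with parameter `p ≤ 1/2`, state `0` is reached
almost surely from any initial distribution; in particular the STS is decisive w.r.t. `{0}`. -/
theorem randomWalk_le_half_reaches_zero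
    (κ : Kernel ℕ ℕ) [IsMarkovKernel κ]
    (p : ℝ≥0∞) (hp0 : 0 < p) (hp : p ≤ 1 / 2)
    (hκ0 : κ 0 = Measure.dirac 1)
    (hκ : ∀ n : ℕ, κ (n + 1) = p • Measure.dirac (n + 2) + (1 - p) • Measure.dirac n)
    (P : Measure ℕ → Measure (ℕ → ℕ)) (hP : IsMarkovMeasureFamily κ P) :
    (∀ μ : Measure ℕ, IsProbabilityMeasure μ → P μ (FEv {0}) = 1) ∧
      Decisive P ({0} : Set ℕ) := by
  have main : ∀ μ : Measure ℕ, IsProbabilityMeasure μ → P μ (FEv {0}) = 1 := by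
    intro μ hμ
    obtain ⟨hPprob, hFD⟩ := hP μ hμ
    haveI := hμ
    haveI := hPprob
    refine le_antisymm prob_le_one ?_
    have hle : ∀ n : ℕ, ∫⁻ s, hitP κ n s ∂μ ≤ P μ (FEv ({0} : Set ℕ)) := by
      intro n
      rw [← finDist_hitSet κ n μ hμ, ← hFD n,
        Measure.map_apply (measurable_pi_lambda _ fun i => measurable_pi_apply i.1)
          (measurableSet_cnt _)]
      refine measure_mono fun ω hω => ?_
      obtain ⟨i, hi⟩ := hω
      exact ⟨i.1, hi⟩
    calc (1 : ℝ≥0∞) = ∫⁻ _, 1 ∂μ := by simp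
      _ = ∫⁻ s, ⨆ n, hitP κ n s ∂μ :=
          lintegral_congr fun s => (hitP_iSup_eq_one κ p hp0 hp hκ s).symm
      _ = ⨆ n, ∫⁻ s, hitP κ n s ∂μ :=
          lintegral_iSup (fun n => measurable_cnt _)
            (monotone_nat_of_le_succ fun n s => hitP_mono κ n s)
      _ ≤ P μ (FEv ({0} : Set ℕ)) := iSup_le hle
  refine ⟨main, fun μ hμ => ?_⟩
  obtain ⟨hPprob, _⟩ := hP μ hμ
  haveI := hPprob
  refine le_antisymm prob_le_one ?_
  rw [← main μ hμ]
  exact measure_mono Set.subset_union_left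


end STS
end

section
/- Let T1 = (S1, Σ1, κ1) and T2 = (S2, Σ2, κ2) be stochastic transition systems and α : S1 → S2 a measurable map such that T2 is an α-abstraction of T1. Then positive probability of reachability is preserved: for every B ∈ Σ2 and every initial probability distribution μ on (S1, Σ1), if Prob^{T1}_μ(F α⁻¹(B)) > 0 then Prob^{T2}_{α_#(μ)}(F B) > 0. -/
open MeasureTheory ProbabilityTheory Filter Set ENNReal

namespace STS

variable {S : Type*} [MeasurableSpace S]

/-- Two measures on the same space are qualitatively equivalent if they have the same
measurable sets of positive measure. -/
def QualEquiv {T : Type*} [MeasurableSpace T] (μ ν : Measure T) : Prop :=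
  ∀ C : Set T, MeasurableSet C → (0 < μ C ↔ 0 < ν C)

/-- The one-step transformation of a distribution through an STS with kernel `κ`:
`Ω_T(μ)(A) = ∫ κ(s, A) dμ(s)`. -/
noncomputable def transform {T : Type*} [MeasurableSpace T] (κ : Kernel T T) (μ : Measure T) :
    Measure T :=
  μ.bind (fun s => κ s)

/-- `T2` (with kernel `κ2`) is an `α`-abstraction of `T1` (with kernel `κ1`): for every initial
probability distribution `μ` on `S1`, `α_#(Ω_{T1}(μ))` and `Ω_{T2}(α_#(μ))` are qualitatively
equivalent. -/
def IsAbstraction {S1 S2 : Type*} [MeasurableSpace S1] [MeasurableSpace S2]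
    (κ1 : Kernel S1 S1) (κ2 : Kernel S2 S2) (α : S1 → S2) : Prop :=
  ∀ μ : Measure S1, IsProbabilityMeasure μ →
    QualEquiv ((transform κ1 μ).map α) (transform κ2 (μ.map α))

section Aux

variable {S1 S2 : Type*} [MeasurableSpace S1] [MeasurableSpace S2]

lemma transform_isProb (κ : Kernel S1 S1) [IsMarkovKernel κ] (μ : Measure S1)
    [IsProbabilityMeasure μ] : IsProbabilityMeasure (transform κ μ) := by
  constructor
  rw [transform, Measure.bind_apply MeasurableSet.univ (Kernel.measurable κ).aemeasurable]
  simp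

lemma iterate_transform_isProb (κ : Kernel S1 S1) [IsMarkovKernel κ] (μ : Measure S1)
    (hμ : IsProbabilityMeasure μ) (k : ℕ) : IsProbabilityMeasure ((transform κ)^[k] μ) := by
  induction k with
  | zero => exact hμ
  | succ n ih =>
    rw [Function.iterate_succ_apply']
    exact @transform_isProb _ _ κ _ _ ih

lemma transform_qualEquiv (κ : Kernel S2 S2) {ν1 ν2 : Measure S2} (h : QualEquiv ν1 ν2) :
    QualEquiv (transform κ ν1) (transform κ ν2) := by
  intro C hC
  rw [transform, transform, Measure.bind_apply hC (Kernel.measurable κ).aemeasurable,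
    Measure.bind_apply hC (Kernel.measurable κ).aemeasurable,
    lintegral_pos_iff_support (κ.measurable_coe hC),
    lintegral_pos_iff_support (κ.measurable_coe hC)]
  exact h _ (measurableSet_support (κ.measurable_coe hC))

lemma measurable_snocFun {n : ℕ} :
    Measurable (fun p : (Fin (n + 1) → S1) × S1 => (Fin.snoc p.1 p.2 : Fin (n + 2) → S1)) := by
  refine measurable_pi_lambda _ fun i => ?_
  induction i using Fin.lastCases with
  | last => simpa [Fin.snoc_last] using measurable_snd
  | cast j =>
    simp only [Fin.snoc_castSucc]
    exact (measurable_pi_apply j).comp measurable_fst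

lemma measurable_snoc_single {n : ℕ} (x : Fin (n + 1) → S1) :
    Measurable (fun a : S1 => (Fin.snoc x a : Fin (n + 2) → S1)) := by
  refine measurable_pi_lambda _ fun i => ?_
  induction i using Fin.lastCases with
  | last =>
    simp only [Fin.snoc_last]
    exact measurable_id
  | cast j =>
    simp only [Fin.snoc_castSucc]
    exact measurable_const

lemma measurable_step (κ : Kernel S1 S1) [IsMarkovKernel κ] (n : ℕ) :
    Measurable (fun x : Fin (n + 1) → S1 =>
      (κ (x (Fin.last n))).map (fun a : S1 => (Fin.snoc x a : Fin (n + 2) → S1))) := by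
  refine Measure.measurable_of_measurable_coe _ fun s hs => ?_
  have heq : (fun x : Fin (n + 1) → S1 =>
      ((κ (x (Fin.last n))).map (fun a : S1 => (Fin.snoc x a : Fin (n + 2) → S1))) s)
      = fun x => (κ.comap (fun y : Fin (n + 1) → S1 => y (Fin.last n))
        (measurable_pi_apply _)) x (Prod.mk x ⁻¹'
          ((fun p : (Fin (n + 1) → S1) × S1 => (Fin.snoc p.1 p.2 : Fin (n + 2) → S1)) ⁻¹' s)) := by
    funext x
    rw [Measure.map_apply (measurable_snoc_single x) hs]
    rfl
  rw [heq]
  exact Kernel.measurable_kernel_prodMk_left (measurable_snocFun hs)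

lemma finDist_map_last (κ : Kernel S1 S1) [IsMarkovKernel κ] (μ : Measure S1) (n : ℕ) :
    (finDist κ μ n).map (fun y => y (Fin.last n)) = (transform κ)^[n] μ := by
  induction n with
  | zero =>
    have hconst : Measurable (fun s : S1 => fun _ : Fin 1 => s) :=
      measurable_pi_lambda _ fun _ => measurable_id
    have hcomp : (fun y : Fin 1 → S1 => y (Fin.last 0)) ∘ (fun s : S1 => fun _ : Fin 1 => s)
        = id := rfl
    rw [finDist, Measure.map_map (measurable_pi_apply _) hconst, hcomp, Measure.map_id,
      Function.iterate_zero_apply]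
  | succ n ih =>
    ext A hA
    rw [Function.iterate_succ_apply', Measure.map_apply (measurable_pi_apply _) hA, finDist,
      Measure.bind_apply (hA.preimage (measurable_pi_apply _)) (measurable_step κ n).aemeasurable]
    have h1 : ∀ x : Fin (n + 1) → S1,
        ((κ (x (Fin.last n))).map (Fin.snoc x)) ((fun y : Fin (n + 2) → S1 => y (Fin.last (n + 1))) ⁻¹' A)
        = κ (x (Fin.last n)) A := by
      intro x
      rw [Measure.map_apply (measurable_snoc_single x) (hA.preimage (measurable_pi_apply _))]
      congr 1
      ext a
      simp [Fin.snoc_last]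
    simp_rw [h1]
    rw [transform, Measure.bind_apply hA (Kernel.measurable κ).aemeasurable, ← ih,
      lintegral_map (κ.measurable_coe hA) (measurable_pi_apply _)]

lemma marginal_eval (κ : Kernel S1 S1) [IsMarkovKernel κ]
    (P : Measure S1 → Measure (ℕ → S1)) (hP : IsMarkovMeasureFamily κ P)
    (μ : Measure S1) (hμ : IsProbabilityMeasure μ) (k : ℕ) {A : Set S1} (hA : MeasurableSet A) :
    P μ ((fun ω => ω k) ⁻¹' A) = ((transform κ)^[k] μ) A := by
  have hmap := (hP μ hμ).2 k
  have hproj : Measurable (fun ω : ℕ → S1 => fun i : Fin (k + 1) => ω i.1) :=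
    measurable_pi_lambda _ fun i => measurable_pi_apply i.1
  have hset : ((fun ω : ℕ → S1 => ω k) ⁻¹' A)
      = (fun ω : ℕ → S1 => fun i : Fin (k + 1) => ω i.1) ⁻¹' ((fun y => y (Fin.last k)) ⁻¹' A) := by
    ext ω; simp [Fin.last]
  rw [hset, ← Measure.map_apply hproj (hA.preimage (measurable_pi_apply _)), hmap,
    ← finDist_map_last κ μ k, Measure.map_apply (measurable_pi_apply _) hA]

lemma iterate_qualEquiv {κ1 : Kernel S1 S1} [IsMarkovKernel κ1] {κ2 : Kernel S2 S2}
    {α : S1 → S2} (hα : Measurable α) (habs : IsAbstraction κ1 κ2 α)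
    (μ : Measure S1) (hμ : IsProbabilityMeasure μ) (k : ℕ) :
    QualEquiv (((transform κ1)^[k] μ).map α) ((transform κ2)^[k] (μ.map α)) := by
  induction k with
  | zero => intro C _; simp
  | succ n ih =>
    rw [Function.iterate_succ_apply', Function.iterate_succ_apply']
    intro C hC
    have hprob := iterate_transform_isProb κ1 μ hμ n
    exact (habs _ hprob C hC).trans (transform_qualEquiv κ2 ih C hC)

end Aux

/-- An `α`-abstraction preserves positive probability of reachability:
if `Prob^{T1}_μ(F α⁻¹(B)) > 0` then `Prob^{T2}_{α_#(μ)}(F B) > 0`. -/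
theorem abstraction_preserves_positive_reachability
    {S1 S2 : Type*} [MeasurableSpace S1] [MeasurableSpace S2]
    (κ1 : Kernel S1 S1) [IsMarkovKernel κ1] (κ2 : Kernel S2 S2) [IsMarkovKernel κ2]
    (P1 : Measure S1 → Measure (ℕ → S1)) (hP1 : IsMarkovMeasureFamily κ1 P1)
    (P2 : Measure S2 → Measure (ℕ → S2)) (hP2 : IsMarkovMeasureFamily κ2 P2)
    (α : S1 → S2) (hα : Measurable α)
    (habs : IsAbstraction κ1 κ2 α) :
    ∀ B : Set S2, MeasurableSet B → ∀ μ : Measure S1, IsProbabilityMeasure μ →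
      0 < P1 μ (FEv (α ⁻¹' B)) → 0 < P2 (μ.map α) (FEv B)     := by
  intro B hB μ hμ hpos
  have hAm : MeasurableSet (α ⁻¹' B) := hB.preimage hα
  have hμα : IsProbabilityMeasure (μ.map α) := Measure.isProbabilityMeasure_map hα.aemeasurable
  have hUnion : FEv (α ⁻¹' B) = ⋃ k, (fun ω : ℕ → S1 => ω k) ⁻¹' (α ⁻¹' B) := by
    ext ω; simp [FEv]
  obtain ⟨k, hk⟩ : ∃ k, 0 < P1 μ ((fun ω : ℕ → S1 => ω k) ⁻¹' (α ⁻¹' B)) := by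
    by_contra h
    push_neg at h
    have h0 : P1 μ (FEv (α ⁻¹' B)) = 0 := by
      rw [hUnion]
      exact measure_iUnion_null fun k => le_antisymm (h k) zero_le
    rw [h0] at hpos
    exact lt_irrefl _ hpos
  rw [marginal_eval κ1 P1 hP1 μ hμ k hAm] at hk
  have h1 : 0 < (((transform κ1)^[k] μ).map α) B := by
    rwa [Measure.map_apply hα hB]
  have h2 : 0 < ((transform κ2)^[k] (μ.map α)) B :=
    (iterate_qualEquiv hα habs μ hμ k B hB).mp h1
  rw [← marginal_eval κ2 P2 hP2 (μ.map α) hμα k hB] at h2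
  exact h2.trans_le (measure_mono fun ω hω => ⟨k, hω⟩)


end STS
end

section
/- Let T = (S, Σ, κ) be a stochastic transition system and B ∈ Σ. If there exists p > 0 such that for every state s ∈ S ∖ B̃ (i.e., every state from which B is reached with positive probability), Prob_{δ_s}(F B) ≥ p, then T is decisive with respect to B. -/
open MeasureTheory ProbabilityTheory Filter Set ENNReal

namespace STS

variable {S : Type*} [MeasurableSpace S]

set_option linter.unusedSectionVars false

lemma measurable_snoc {n : ℕ} :
    Measurable (fun p : (Fin n → S) × S => (Fin.snoc p.1 p.2 : Fin (n+1) → S)) := by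
  apply measurable_pi_lambda
  intro i
  induction i using Fin.lastCases with
  | last => simpa using measurable_snd
  | cast i => simp only [Fin.snoc_castSucc]; exact (measurable_pi_apply i).comp measurable_fst

noncomputable def stepf (κ : Kernel S S) (A : Set S) (f : S → ℝ≥0∞) : S → ℝ≥0∞ :=
  fun s => ∫⁻ t, A.indicator f t ∂κ s

lemma measurable_stepf (κ : Kernel S S) [IsMarkovKernel κ] {A : Set S} (hA : MeasurableSet A)
    {f : S → ℝ≥0∞} (hf : Measurable f) : Measurable (stepf κ A f) := by
  apply Measurable.lintegral_kernel_prod_right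
  exact ((hf.indicator hA).comp measurable_snd)

noncomputable def qf (κ : Kernel S S) (A : Set S) (m : ℕ) : S → ℝ≥0∞ :=
  (stepf κ A)^[m] (fun _ => 1)

lemma measurable_qf (κ : Kernel S S) [IsMarkovKernel κ] {A : Set S} (hA : MeasurableSet A)
    (m : ℕ) : Measurable (qf κ A m) := by
  induction m with
  | zero => exact measurable_const
  | succ m ih =>
    rw [qf, Function.iterate_succ_apply'] 
    exact measurable_stepf κ hA ih

lemma stepf_mono (κ : Kernel S S) (A : Set S) {f g : S → ℝ≥0∞} (h : ∀ s, f s ≤ g s) :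
    ∀ s, stepf κ A f s ≤ stepf κ A g s := by
  intro s
  exact lintegral_mono fun t => Set.indicator_le_indicator' (fun _ => h t) -- guess

lemma qf_le_one (κ : Kernel S S) [IsMarkovKernel κ] (A : Set S) (m : ℕ) :
    ∀ s, qf κ A m s ≤ 1 := by
  induction m with
  | zero => intro s; simp [qf]
  | succ m ih =>
    intro s
    rw [qf, Function.iterate_succ_apply']
    calc stepf κ A ((stepf κ A)^[m] fun _ => 1) s ≤ ∫⁻ _, 1 ∂κ s := by
          apply lintegral_mono
          intro t
          exact le_trans (Set.indicator_le_self _ _ t) (ih t)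
      _ = 1 := by simp

lemma qf_antitone (κ : Kernel S S) [IsMarkovKernel κ] (A : Set S) (m : ℕ) :
    ∀ s, qf κ A (m+1) s ≤ qf κ A m s := by
  induction m with
  | zero => intro s; simpa [qf, stepf] using qf_le_one κ A 1 s
  | succ m ih =>
    intro s
    have ih' : ∀ s, stepf κ A ((stepf κ A)^[m] fun _ => 1) s ≤ ((stepf κ A)^[m] fun _ => 1) s := by
      intro s
      have := ih s
      rwa [qf, Function.iterate_succ_apply', qf] at this
    rw [qf, Function.iterate_succ_apply', qf, Function.iterate_succ_apply']
    exact stepf_mono κ A ih' s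

def cyl (E A : Set S) (n m : ℕ) : Set (Fin (n + m + 1) → S) :=
  {y | (∀ k : Fin (n + m + 1), k.1 ≤ n → y k ∈ E) ∧ (∀ k : Fin (n + m + 1), n < k.1 → y k ∈ A)}

lemma measurableSet_cyl {E A : Set S} (hE : MeasurableSet E) (hA : MeasurableSet A) (n m : ℕ) :
    MeasurableSet (cyl E A n m) := by
  have : cyl E A n m = (⋂ k : Fin (n + m + 1), {y | k.1 ≤ n → y k ∈ E}) ∩
      ⋂ k : Fin (n + m + 1), {y | n < k.1 → y k ∈ A} := by
    ext y; simp [cyl, Set.mem_iInter]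
  rw [this]
  apply MeasurableSet.inter <;> apply MeasurableSet.iInter <;> intro k
  · by_cases h : k.1 ≤ n
    · have : {y : Fin (n+m+1) → S | k.1 ≤ n → y k ∈ E} = (fun y => y k) ⁻¹' E := by
        ext y; simp [h]
      rw [this]; exact (measurable_pi_apply k) hE
    · have : {y : Fin (n+m+1) → S | k.1 ≤ n → y k ∈ E} = Set.univ := by
        ext y; simp [h]
      rw [this]; exact MeasurableSet.univ
  · by_cases h : n < k.1
    · have : {y : Fin (n+m+1) → S | n < k.1 → y k ∈ A} = (fun y => y k) ⁻¹' A := by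
        ext y; simp [h]
      rw [this]; exact (measurable_pi_apply k) hA
    · have : {y : Fin (n+m+1) → S | n < k.1 → y k ∈ A} = Set.univ := by
        ext y; simp [h]
      rw [this]; exact MeasurableSet.univ

lemma snoc_mem_cyl_iff {E A : Set S} {n m : ℕ} (x : Fin (n + m + 1) → S) (t : S) :
    (Fin.snoc x t : Fin (n + m + 1 + 1) → S) ∈ cyl E A n (m + 1) ↔
      x ∈ cyl E A n m ∧ t ∈ A := by
  constructor
  · rintro ⟨h1, h2⟩
    refine ⟨⟨fun k hk => ?_, fun k hk => ?_⟩, ?_⟩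
    · have := h1 k.castSucc (by simpa using hk)
      rwa [Fin.snoc_castSucc] at this
    · have := h2 k.castSucc (by simpa using hk)
      rwa [Fin.snoc_castSucc] at this
    · have := h2 (Fin.last (n + m + 1)) (by simp)
      rwa [Fin.snoc_last] at this
  · rintro ⟨⟨h1, h2⟩, ht⟩
    refine ⟨fun k hk => ?_, fun k hk => ?_⟩
    · induction k using Fin.lastCases with
      | last => simp at hk
      | cast i => rw [Fin.snoc_castSucc]; exact h1 i (by simpa using hk)
    · induction k using Fin.lastCases with
      | last =>
        show (Fin.snoc x t : Fin (n + m + 1 + 1) → S) (Fin.last (n + m + 1)) ∈ A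
        rwa [Fin.snoc_last]
      | cast i => rw [Fin.snoc_castSucc]; exact h2 i (by simpa using hk)

lemma measurable_snocMap (κ : Kernel S S) [IsMarkovKernel κ] (n : ℕ) :
    Measurable (fun x : Fin (n + 1) → S => ((κ (x (Fin.last n))).map (Fin.snoc x) : Measure (Fin (n+2) → S))) := by
  apply Measure.measurable_of_measurable_coe
  intro T hT
  have hW : MeasurableSet {p : (Fin (n+1) → S) × S | (Fin.snoc p.1 p.2 : Fin (n+2) → S) ∈ T} :=
    measurable_snoc hT
  have heval : Measurable (fun x : Fin (n+1) → S => x (Fin.last n)) := measurable_pi_apply _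
  have key : ∀ x : Fin (n+1) → S, (κ (x (Fin.last n))).map (Fin.snoc x) T =
      ∫⁻ t, {p : (Fin (n+1) → S) × S | (Fin.snoc p.1 p.2 : Fin (n+2) → S) ∈ T}.indicator
        (fun _ => (1:ℝ≥0∞)) (x, t) ∂(κ.comap (fun x : Fin (n+1) → S => x (Fin.last n)) heval) x := by
    intro x
    rw [Kernel.comap_apply]
    have hsx : Measurable (fun t : S => (Fin.snoc x t : Fin (n + 1 + 1) → S)) :=
      measurable_snoc.comp measurable_prodMk_left
    rw [Measure.map_apply hsx hT, ← lintegral_indicator_one (hsx hT)]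
    exact lintegral_congr fun t => rfl
  simp_rw [key]
  exact Measurable.lintegral_kernel_prod_right'
    ((measurable_const.indicator hW))

lemma key_lemma (κ : Kernel S S) [IsMarkovKernel κ] {E A : Set S}
    (hE : MeasurableSet E) (hA : MeasurableSet A) :
    ∀ (m n : ℕ) (μ : Measure S) (f : S → ℝ≥0∞), Measurable f →
    ∫⁻ y, (cyl E A n m).indicator (fun y => f (y (Fin.last (n + m)))) y ∂(finDist κ μ (n + m))
      = ∫⁻ x, (cyl E A n 0).indicator (fun x => (stepf κ A)^[m] f (x (Fin.last n))) x
          ∂(finDist κ μ n) := by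
  intro m
  induction m with
  | zero => intro n μ f hf; rfl
  | succ m ih =>
    intro n μ f hf
    have fd : finDist κ μ (n + (m + 1)) = (finDist κ μ (n + m)).bind
        (fun x => (κ (x (Fin.last (n + m)))).map (Fin.snoc x)) := rfl
    have hfl : Measurable fun y : Fin (n + m + 1 + 1) → S => f (y (Fin.last (n + m + 1))) :=
      hf.comp (measurable_pi_apply _)
    have hind : Measurable ((cyl E A n (m + 1)).indicator
        (fun y : Fin (n + m + 1 + 1) → S => f (y (Fin.last (n + m + 1))))) :=
      hfl.indicator (measurableSet_cyl hE hA n (m + 1))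
    rw [fd]
    show (∫⁻ y, (cyl E A n (m + 1)).indicator
        (fun y : Fin (n + m + 1 + 1) → S => f (y (Fin.last (n + m + 1)))) y
        ∂((finDist κ μ (n + m)).bind
          (fun x => (κ (x (Fin.last (n + m)))).map (Fin.snoc x))))
      = ∫⁻ x, (cyl E A n 0).indicator (fun x => (stepf κ A)^[m + 1] f (x (Fin.last n))) x
          ∂(finDist κ μ n)
    erw [Measure.lintegral_bind (measurable_snocMap κ (n + m)).aemeasurable hind.aemeasurable]
    have hstep : ∀ x : Fin (n + m + 1) → S,
        (∫⁻ z, (cyl E A n (m + 1)).indicator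
            (fun y : Fin (n + m + 1 + 1) → S => f (y (Fin.last (n + m + 1)))) z
          ∂((κ (x (Fin.last (n + m)))).map (Fin.snoc x)))
        = (cyl E A n m).indicator (fun x => stepf κ A f (x (Fin.last (n + m)))) x := by
      intro x
      have hsx : Measurable (fun t : S => (Fin.snoc x t : Fin (n + m + 1 + 1) → S)) :=
        measurable_snoc.comp measurable_prodMk_left
      rw [lintegral_map hind hsx]
      have hpt : ∀ t : S, (cyl E A n (m + 1)).indicator
          (fun y : Fin (n + m + 1 + 1) → S => f (y (Fin.last (n + m + 1)))) (Fin.snoc x t)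
          = (cyl E A n m).indicator (fun _ => A.indicator f t) x := by
        intro t
        have hlast : (Fin.snoc x t : Fin (n + m + 1 + 1) → S) (Fin.last (n + m + 1)) = t :=
          by simp
        by_cases hx : x ∈ cyl E A n m <;> by_cases ht : t ∈ A <;>
          simp [Set.indicator_apply, snoc_mem_cyl_iff, hx, ht, hlast]
      simp_rw [hpt]
      by_cases hx : x ∈ cyl E A n m
      · simp only [Set.indicator_of_mem hx]
        rfl
      · simp only [Set.indicator_of_notMem hx, lintegral_zero]
    trans ∫⁻ x, (cyl E A n m).indicator
        (fun x => stepf κ A f (x (Fin.last (n + m)))) x ∂(finDist κ μ (n + m))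
    · exact lintegral_congr hstep
    · have := ih n μ (stepf κ A f) (measurable_stepf κ hA hf)
      rw [this, Function.iterate_succ_apply]



lemma mem_cyl_proj {E A : Set S} {n m : ℕ} (ω : ℕ → S) :
    (fun i : Fin (n + m + 1) => ω i.1) ∈ cyl E A n m ↔
      (∀ k ≤ n, ω k ∈ E) ∧ (∀ k, n < k → k ≤ n + m → ω k ∈ A) := by
  constructor
  · rintro ⟨h1, h2⟩
    exact ⟨fun k hk => h1 ⟨k, by omega⟩ hk, fun k hk1 hk2 => h2 ⟨k, by omega⟩ hk1⟩
  · rintro ⟨h1, h2⟩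
    exact ⟨fun k hk => h1 k.1 hk, fun k hk => h2 k.1 hk (Nat.lt_succ_iff.mp k.isLt)⟩

lemma qf_full_antitone (κ : Kernel S S) [IsMarkovKernel κ] (A : Set S) (s : S) :
    Antitone (fun m => qf κ A m s) :=
  antitone_nat_of_succ_le fun m => qf_antitone κ A m s

/-- If there is `p > 0` such that every state outside the avoid-set `B̃`
reaches `B` with probability at least `p`, then the STS is decisive w.r.t. `B`. -/
theorem decisive_of_uniform_bound_outside_avoidSet
    (κ : Kernel S S) [IsMarkovKernel κ]
    (P : Measure S → Measure (ℕ → S)) (hP : IsMarkovMeasureFamily κ P)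
    (B : Set S) (hB : MeasurableSet B)
    (p : ℝ≥0∞) (hp : 0 < p)
    (hreach : ∀ s ∈ (avoidSet P B)ᶜ, p ≤ P (Measure.dirac s) (FEv B)) :
    Decisive P B := by
  classical
  -- cap `p` at 1
  set p' : ℝ≥0∞ := min p 1 with hp'def
  have hp'0 : p' ≠ 0 := (lt_min hp zero_lt_one).ne'
  have hp'le : p' ≤ 1 := min_le_right _ _
  -- basic measurability
  have hFEvB : MeasurableSet (FEv B) := by
    have : FEv B = ⋃ k : ℕ, (fun ω : ℕ → S => ω k) ⁻¹' B := by
      ext ω; simp [FEv]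
    rw [this]; exact MeasurableSet.iUnion fun k => (measurable_pi_apply k) hB
  have hπ : ∀ N : ℕ, Measurable (fun ω : ℕ → S => fun i : Fin (N + 1) => ω i.1) :=
    fun N => measurable_pi_lambda _ fun i => measurable_pi_apply i.1
  have hpre : ∀ (ν : Measure S), IsProbabilityMeasure ν → ∀ N : ℕ,
      ∀ U : Set (Fin (N + 1) → S), MeasurableSet U →
      P ν ((fun ω : ℕ → S => fun i : Fin (N + 1) => ω i.1) ⁻¹' U) = finDist κ ν N U := by
    intro ν hν N U hU
    rw [← (hP ν hν).2 N, Measure.map_apply (hπ N) hU]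
  have hprob : ∀ (ν : Measure S), IsProbabilityMeasure ν → ∀ N : ℕ,
      IsProbabilityMeasure (finDist κ ν N) := by
    intro ν hν N
    rw [← (hP ν hν).2 N]
    haveI := (hP ν hν).1
    exact Measure.isProbabilityMeasure_map (hπ N).aemeasurable
  have hqm : ∀ m, Measurable (qf κ Bᶜ m) := fun m => measurable_qf κ hB.compl m
  set r : S → ℝ≥0∞ := fun s => Bᶜ.indicator (fun s => ⨅ m, qf κ Bᶜ m s) s with hrdef
  have hrmeas : Measurable r := (Measurable.iInf hqm).indicator hB.compl
  have hrle1 : ∀ s, r s ≤ 1 := by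
    intro s
    by_cases hs : s ∈ Bᶜ
    · rw [hrdef]; simp only [Set.indicator_of_mem hs]
      exact le_trans (iInf_le _ 0) (qf_le_one κ Bᶜ 0 s)
    · rw [hrdef]; simp [Set.indicator_of_notMem hs]
  -- the probability, starting from `dirac s`, of staying out of `B` for the
  -- first `m+1` steps is `Bᶜ.indicator (qf κ Bᶜ m) s`
  have hstay : ∀ (ν : Measure S), IsProbabilityMeasure ν → ∀ m : ℕ,
      P ν {ω : ℕ → S | ∀ k ≤ m, ω k ∈ Bᶜ}
        = ∫⁻ x, (cyl Bᶜ Bᶜ 0 0).indicator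
            (fun x => qf κ Bᶜ m (x (Fin.last 0))) x ∂(finDist κ ν 0) := by
    intro ν hν m
    have hset : {ω : ℕ → S | ∀ k ≤ m, ω k ∈ Bᶜ}
        = (fun ω : ℕ → S => fun i : Fin (0 + m + 1) => ω i.1) ⁻¹' (cyl Bᶜ Bᶜ 0 m) := by
      ext ω
      rw [Set.mem_preimage, mem_cyl_proj]
      constructor
      · intro h
        exact ⟨fun k hk => h k (by omega), fun k _ hk2 => h k (by omega)⟩
      · rintro ⟨h1, h2⟩ k hk
        rcases Nat.eq_zero_or_pos k with hk0 | hk0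
        · subst hk0; exact h1 0 le_rfl
        · exact h2 k hk0 (by omega)
    rw [hset, hpre ν hν (0 + m) _ (measurableSet_cyl hB.compl hB.compl 0 m)]
    have hl : finDist κ ν (0 + m) (cyl Bᶜ Bᶜ 0 m)
        = ∫⁻ y, (cyl Bᶜ Bᶜ 0 m).indicator
            (fun y => (fun _ : S => (1:ℝ≥0∞)) (y (Fin.last (0 + m)))) y ∂(finDist κ ν (0 + m)) := by
      have : ((cyl Bᶜ Bᶜ 0 m).indicator
          (fun y => (fun _ : S => (1:ℝ≥0∞)) (y (Fin.last (0 + m)))))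
          = (cyl Bᶜ Bᶜ 0 m).indicator 1 := rfl
      rw [this, lintegral_indicator_one (measurableSet_cyl hB.compl hB.compl 0 m)]
    rw [hl, key_lemma κ hB.compl hB.compl m 0 ν (fun _ => 1) measurable_const]
    rfl
  -- value of that integral for a Dirac initial distribution
  have hdirac : ∀ (s : S) (m : ℕ),
      ∫⁻ x, (cyl Bᶜ Bᶜ 0 0).indicator
          (fun x => qf κ Bᶜ m (x (Fin.last 0))) x ∂(finDist κ (Measure.dirac s) 0)
        = Bᶜ.indicator (qf κ Bᶜ m) s := by
    intro s m
    have hc : Measurable (fun s : S => (fun _ : Fin (0 + 0 + 1) => s)) :=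
      measurable_pi_lambda _ fun _ => measurable_id
    have hg : Measurable ((cyl Bᶜ Bᶜ 0 0).indicator
        (fun x : Fin (0 + 0 + 1) → S => qf κ Bᶜ m (x (Fin.last 0)))) :=
      ((hqm m).comp (measurable_pi_apply _)).indicator
        (measurableSet_cyl hB.compl hB.compl 0 0)
    have h0 : finDist κ (Measure.dirac s) 0
        = (Measure.dirac s).map (fun s => (fun _ : Fin (0 + 0 + 1) => s)) := rfl
    rw [h0, lintegral_map hg hc]
    have hdl : ∫⁻ a, (cyl Bᶜ Bᶜ 0 0).indicator
        (fun x : Fin (0 + 0 + 1) → S => qf κ Bᶜ m (x (Fin.last 0))) (fun _ => a) ∂(Measure.dirac s)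
        = (cyl Bᶜ Bᶜ 0 0).indicator
            (fun x : Fin (0 + 0 + 1) → S => qf κ Bᶜ m (x (Fin.last 0))) (fun _ => s) :=
      lintegral_dirac' s (hg.comp hc)
    rw [hdl]
    have hmem : (fun _ : Fin (0 + 0 + 1) => s) ∈ cyl Bᶜ Bᶜ 0 0 ↔ s ∈ Bᶜ := by
      constructor
      · intro h; exact h.1 ⟨0, by omega⟩ (by omega)
      · intro h; exact ⟨fun k _ => h, fun k _ => h⟩
    by_cases hs : s ∈ Bᶜ
    · rw [Set.indicator_of_mem (hmem.mpr hs), Set.indicator_of_mem hs]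
    · rw [Set.indicator_of_notMem (fun h => hs (hmem.mp h)),
        Set.indicator_of_notMem hs]
  have hstaydirac : ∀ (s : S) (m : ℕ),
      P (Measure.dirac s) {ω : ℕ → S | ∀ k ≤ m, ω k ∈ Bᶜ} = Bᶜ.indicator (qf κ Bᶜ m) s := by
    intro s m
    rw [hstay (Measure.dirac s) inferInstance m, hdirac s m]
  -- probability of avoiding B forever, from dirac s
  have hglobmeas : MeasurableSet {ω : ℕ → S | ∀ k, ω k ∈ Bᶜ} := by
    have : {ω : ℕ → S | ∀ k, ω k ∈ Bᶜ} = ⋂ k : ℕ, (fun ω : ℕ → S => ω k) ⁻¹' Bᶜ := by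
      ext ω; simp
    rw [this]; exact MeasurableSet.iInter fun k => (measurable_pi_apply k) hB.compl
  have hstaymeas : ∀ m : ℕ, MeasurableSet {ω : ℕ → S | ∀ k ≤ m, ω k ∈ Bᶜ} := by
    intro m
    have : {ω : ℕ → S | ∀ k ≤ m, ω k ∈ Bᶜ}
        = ⋂ k : ℕ, ⋂ (_ : k ≤ m), (fun ω : ℕ → S => ω k) ⁻¹' Bᶜ := by
      ext ω; simp
    rw [this]
    exact MeasurableSet.iInter fun k => MeasurableSet.iInter
      fun _ => (measurable_pi_apply k) hB.compl
  have hglob : ∀ s : S, P (Measure.dirac s) {ω : ℕ → S | ∀ k, ω k ∈ Bᶜ} = r s := by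
    intro s
    haveI := (hP (Measure.dirac s) inferInstance).1
    have hset : {ω : ℕ → S | ∀ k, ω k ∈ Bᶜ} = ⋂ m : ℕ, {ω : ℕ → S | ∀ k ≤ m, ω k ∈ Bᶜ} := by
      ext ω
      simp only [Set.mem_iInter, Set.mem_setOf_eq]
      exact ⟨fun h m k _ => h k, fun h k => h k k le_rfl⟩
    have hanti : Antitone (fun m => {ω : ℕ → S | ∀ k ≤ m, ω k ∈ Bᶜ}) := by
      intro m m' hmm ω hω k hk
      exact hω k (le_trans hk hmm)
    rw [hset, Antitone.measure_iInter hanti (fun m => (hstaymeas m).nullMeasurableSet)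
      ⟨0, measure_ne_top _ _⟩]
    simp_rw [hstaydirac s]
    by_cases hs : s ∈ Bᶜ
    · rw [hrdef]
      simp only [Set.indicator_of_mem hs]
    · rw [hrdef]
      simp only [Set.indicator_of_notMem hs, iInf_const]
  have hFEvVal : ∀ s : S, P (Measure.dirac s) (FEv B) = 1 - r s := by
    intro s
    haveI := (hP (Measure.dirac s) inferInstance).1
    have : FEv B = {ω : ℕ → S | ∀ k, ω k ∈ Bᶜ}ᶜ := by
      ext ω; simp [FEv]
    rw [this, prob_compl_eq_one_sub hglobmeas, hglob]
  -- the avoid set is measurable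
  have havoid : MeasurableSet (avoidSet P B) := by
    have : avoidSet P B = r ⁻¹' (Ici 1) := by
      ext s
      simp only [avoidSet, Set.mem_setOf_eq, hFEvVal s, Set.mem_preimage, Set.mem_Ici]
      exact tsub_eq_zero_iff_le
    rw [this]; exact hrmeas measurableSet_Ici
  have hFEvA : MeasurableSet (FEv (avoidSet P B)) := by
    have : FEv (avoidSet P B) = ⋃ k : ℕ, (fun ω : ℕ → S => ω k) ⁻¹' (avoidSet P B) := by
      ext ω; simp [FEv]
    rw [this]; exact MeasurableSet.iUnion fun k => (measurable_pi_apply k) havoid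
  -- uniform bound: outside B ∪ avoidSet, the never-reach probability is ≤ 1 - p'
  have hboundE : ∀ s ∈ (B ∪ avoidSet P B)ᶜ, (⨅ m, qf κ Bᶜ m s) ≤ 1 - p' := by
    intro s hs
    rw [Set.mem_compl_iff, Set.mem_union] at hs
    push_neg at hs
    obtain ⟨hsB, hsA⟩ := hs
    have h1 : p' ≤ 1 - r s := by
      refine le_trans (min_le_left p 1) ?_
      rw [← hFEvVal s]
      exact hreach s hsA
    have h2 : r s ≤ 1 - p' := by
      have := tsub_le_tsub_left h1 1
      rwa [ENNReal.sub_sub_cancel one_ne_top (hrle1 s)] at this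
    rw [hrdef] at h2
    simpa only [Set.indicator_of_mem (Set.mem_compl hsB)] using h2
  -- now the main argument
  intro μ hμ
  haveI hPμ := (hP μ hμ).1
  set E : Set S := (B ∪ avoidSet P B)ᶜ with hEdef
  have hE : MeasurableSet E := (hB.union havoid).compl
  have hEB : E ⊆ Bᶜ := fun s hs => fun hsB => hs (Or.inl hsB)
  set W : ℕ → ℕ → Set (ℕ → S) := fun n m =>
    (fun ω : ℕ → S => fun i : Fin (n + m + 1) => ω i.1) ⁻¹' (cyl E Bᶜ n m) with hWdef
  have hWmeas : ∀ n m, MeasurableSet (W n m) :=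
    fun n m => (hπ (n + m)) (measurableSet_cyl hE hB.compl n m)
  have hWmem : ∀ n m (ω : ℕ → S), ω ∈ W n m ↔
      (∀ k ≤ n, ω k ∈ E) ∧ (∀ k, n < k → k ≤ n + m → ω k ∈ Bᶜ) := by
    intro n m ω
    rw [hWdef]
    exact mem_cyl_proj ω
  set D : Set (ℕ → S) := (FEv B ∪ FEv (avoidSet P B))ᶜ with hDdef
  have hDmem : ∀ ω : ℕ → S, ω ∈ D ↔ ∀ k, ω k ∈ E := by
    intro ω
    rw [hDdef]
    simp only [Set.mem_compl_iff, Set.mem_union, FEv, Set.mem_setOf_eq]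
    push_neg
    constructor
    · rintro ⟨h1, h2⟩ k hk
      exact Or.elim hk (h1 k) (h2 k)
    · intro h
      exact ⟨fun k hk => h k (Or.inl hk), fun k hk => h k (Or.inr hk)⟩
  have hDW : ∀ n m, D ⊆ W n m := by
    intro n m ω hω
    rw [hWmem]
    have h := (hDmem ω).mp hω
    exact ⟨fun k _ => h k, fun k _ _ => hEB (h k)⟩
  -- P μ (W n m) as an integral
  have hPW : ∀ n m, P μ (W n m) = ∫⁻ x, (cyl E Bᶜ n 0).indicator
      (fun x => qf κ Bᶜ m (x (Fin.last n))) x ∂(finDist κ μ n) := by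
    intro n m
    rw [hWdef]
    rw [hpre μ hμ (n + m) _ (measurableSet_cyl hE hB.compl n m)]
    have hl : finDist κ μ (n + m) (cyl E Bᶜ n m)
        = ∫⁻ y, (cyl E Bᶜ n m).indicator
            (fun y => (fun _ : S => (1:ℝ≥0∞)) (y (Fin.last (n + m)))) y ∂(finDist κ μ (n + m)) := by
      have : ((cyl E Bᶜ n m).indicator
          (fun y => (fun _ : S => (1:ℝ≥0∞)) (y (Fin.last (n + m)))))
          = (cyl E Bᶜ n m).indicator 1 := rfl
      rw [this, lintegral_indicator_one (measurableSet_cyl hE hB.compl n m)]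
    rw [hl, key_lemma κ hE hB.compl m n μ (fun _ => 1) measurable_const]
    rfl
  -- key estimate: P μ D ≤ (1 - p') * P μ (W n 0)
  have hmain : ∀ n, P μ D ≤ (1 - p') * P μ (W n 0) := by
    intro n
    haveI := hprob μ hμ n
    have hWanti : Antitone (W n) := by
      intro m m' hmm ω hω
      have hω' := (hWmem n m' ω).mp hω
      exact (hWmem n m ω).mpr ⟨hω'.1, fun k hk1 hk2 => hω'.2 k hk1 (by omega)⟩
    have h1 : P μ D ≤ P μ (⋂ m, W n m) :=
      measure_mono (Set.subset_iInter fun m => hDW n m)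
    have h2 : P μ (⋂ m, W n m) = ⨅ m, P μ (W n m) :=
      Antitone.measure_iInter hWanti (fun m => (hWmeas n m).nullMeasurableSet) ⟨0, measure_ne_top _ _⟩
    have h3 : (⨅ m, P μ (W n m)) = ∫⁻ x, (cyl E Bᶜ n 0).indicator
        (fun x => ⨅ m, qf κ Bᶜ m (x (Fin.last n))) x ∂(finDist κ μ n) := by
      simp_rw [hPW n]
      rw [← lintegral_iInf]
      · congr 1
        funext x
        by_cases hx : x ∈ cyl E Bᶜ n 0
        · simp only [Set.indicator_of_mem hx]
        · simp only [Set.indicator_of_notMem hx, iInf_const]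
      · intro m
        exact ((hqm m).comp (measurable_pi_apply _)).indicator
          (measurableSet_cyl hE hB.compl n 0)
      · intro m m' hmm x
        by_cases hx : x ∈ cyl E Bᶜ n 0
        · simp only [Set.indicator_of_mem hx]
          exact qf_full_antitone κ Bᶜ (x (Fin.last n)) hmm
        · simp [Set.indicator_of_notMem hx]
      · have hle : ∫⁻ x, (cyl E Bᶜ n 0).indicator
            (fun x => qf κ Bᶜ 0 (x (Fin.last n))) x ∂(finDist κ μ n) ≤ 1 := by
          have h1 : ∫⁻ x, (cyl E Bᶜ n 0).indicator
              (fun x => qf κ Bᶜ 0 (x (Fin.last n))) x ∂(finDist κ μ n)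
              ≤ ∫⁻ _, 1 ∂(finDist κ μ n) := lintegral_mono fun x =>
            le_trans (Set.indicator_le_self _ _ x) (qf_le_one κ Bᶜ 0 _)
          simpa using h1
        exact ne_of_lt (lt_of_le_of_lt hle one_lt_top)
    have h4 : ∫⁻ x, (cyl E Bᶜ n 0).indicator
        (fun x => ⨅ m, qf κ Bᶜ m (x (Fin.last n))) x ∂(finDist κ μ n)
        ≤ (1 - p') * finDist κ μ n (cyl E Bᶜ n 0) := by
      rw [← lintegral_indicator_const (measurableSet_cyl hE hB.compl n 0) (1 - p')]
      apply lintegral_mono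
      intro x
      by_cases hx : x ∈ cyl E Bᶜ n 0
      · simp only [Set.indicator_of_mem hx]
        have hxE : x (Fin.last n) ∈ E := hx.1 (Fin.last n) le_rfl
        exact hboundE _ hxE
      · simp [Set.indicator_of_notMem hx]
    have h5 : finDist κ μ n (cyl E Bᶜ n 0) = P μ (W n 0) := by
      rw [hWdef]
      exact (hpre μ hμ n _ (measurableSet_cyl hE hB.compl n 0)).symm
    calc P μ D ≤ P μ (⋂ m, W n m) := h1
      _ = ⨅ m, P μ (W n m) := h2
      _ = _ := h3
      _ ≤ (1 - p') * finDist κ μ n (cyl E Bᶜ n 0) := h4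
      _ = (1 - p') * P μ (W n 0) := by rw [h5]
  -- identify the infimum
  have hDinter : D = ⋂ n, W n 0 := by
    ext ω
    rw [Set.mem_iInter]
    constructor
    · intro h n
      exact hDW n 0 h
    · intro h
      rw [hDmem]
      intro k
      exact ((hWmem k 0 ω).mp (h k)).1 k le_rfl
  have hWanti0 : Antitone (fun n => W n 0) := by
    intro n n' hnn ω hω
    have hω' := (hWmem n' 0 ω).mp hω
    exact (hWmem n 0 ω).mpr ⟨fun k hk => hω'.1 k (le_trans hk hnn),
      fun k hk1 hk2 => absurd hk2 (by omega)⟩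
  have hPD : P μ D = ⨅ n, P μ (W n 0) := by
    rw [hDinter]
    exact Antitone.measure_iInter hWanti0 (fun n => (hWmeas n 0).nullMeasurableSet) ⟨0, measure_ne_top _ _⟩
  have hfinal : P μ D ≤ (1 - p') * P μ D := by
    have h := le_iInf fun n => hmain n
    rw [← ENNReal.mul_iInf
      (fun hc => absurd hc (ne_of_lt (lt_of_le_of_lt tsub_le_self one_lt_top))), ← hPD] at h
    exact h
  have hD0 : P μ D = 0 := by
    by_contra h0
    have hne : P μ D ≠ ∞ := measure_ne_top _ _
    have : (1 : ℝ≥0∞) * P μ D ≤ (1 - p') * P μ D := by rwa [one_mul]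
    rw [ENNReal.mul_le_mul_iff_left h0 hne] at this
    have hlt : 1 - p' < 1 := ENNReal.sub_lt_self one_ne_top one_ne_zero hp'0
    exact absurd this (not_le.mpr hlt)
  rw [hDdef] at hD0
  exact (prob_compl_eq_zero_iff (hFEvB.union hFEvA)).mp hD0

end STS
end
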